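/- Assume hypotheses (H1)–(H4) with constants d and b, and let S > 0 satisfy |f(t, 0)| ≤ S for every t ∈ [0,T] (where 0 denotes the zero function on [−r,0]). Set D := d + (b·d·k₀ + S)·T/(k₀ − b·T·k₀ − B·K₀). Then for every λ ∈ (0,1) and every absolutely continuous x : [0,T] → ℝ with x(0) = x(T) (extended to [−r,0) by x(s) := x(s+T)) satisfying x′(t) + B·β(t−δ)·x′(t−δ)/β(t) = λ·f(t, β_t x_t)/β(t) for almost every t ∈ [0,T], one has sup_{t∈[0,T]} |x(t)| ≤ D. In particular, D does not depend on λ. -/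

import Mathlib

open MeasureTheory Set Filter
open scoped ENNReal

/-- The function `β` determined by the impulse moments `ts 1 < ⋯ < ts m` and the jump
coefficients `bs 1, …, bs m`: it equals `∏_{k : ts k < t} (1 + bs k)` on `(ts 1, T - δ)`
and `1` elsewhere. -/
noncomputable def impBeta (ts bs : ℕ → ℝ) (m : ℕ) (T δ : ℝ) (t : ℝ) : ℝ :=
  if ts 1 < t ∧ t < T - δ then
    ∏ k ∈ (Finset.Icc 1 m).filter (fun k => ts k < t), (1 + bs k)
  else 1

/-- `x` is absolutely continuous on `[a,b]` with Lebesgue-integrable (a.e.) derivative `g`. -/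
def AbsContOn (x g : ℝ → ℝ) (a b : ℝ) : Prop :=
  MeasureTheory.IntegrableOn g (Set.Icc a b) ∧
    ∀ t ∈ Set.Icc a b, x t = x a + ∫ s in a..t, g s

/-- `x` is absolutely continuous on the half-open interval `(a,b]` with derivative `g`. -/
def AbsContOnIoc (x g : ℝ → ℝ) (a b : ℝ) : Prop :=
  MeasureTheory.IntegrableOn g (Set.Ioc a b) ∧
    ∀ s ∈ Set.Ioc a b, ∀ t ∈ Set.Ioc a b, x t = x s + ∫ u in s..t, g u

/-- `φ` is regulated on `[a,b]`: it has finite left limits on `(a,b]` and finite right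
limits on `[a,b)`. -/
def RegulatedOn (φ : ℝ → ℝ) (a b : ℝ) : Prop :=
  (∀ τ ∈ Set.Ioc a b, ∃ L : ℝ, Filter.Tendsto φ (nhdsWithin τ (Set.Ico a τ)) (nhds L)) ∧
    (∀ τ ∈ Set.Ico a b, ∃ L : ℝ, Filter.Tendsto φ (nhdsWithin τ (Set.Ioc τ b)) (nhds L))

/-- The periodic extension convention `x(s) := x(s + T)` for `s < 0`. -/
noncomputable def pext (T : ℝ) (x : ℝ → ℝ) (s : ℝ) : ℝ := if s < 0 then x (s + T) else x s



noncomputable def betaVals (bs : ℕ → ℝ) (m : ℕ) : Finset ℝ :=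
  insert 1 ((Finset.Icc 1 m).powerset.image (fun u => ∏ k ∈ u, (1 + bs k)))

lemma impBeta_mem_betaVals (ts bs : ℕ → ℝ) (m : ℕ) (T δ s : ℝ) :
    impBeta ts bs m T δ s ∈ betaVals bs m := by
  unfold impBeta betaVals
  split
  · exact Finset.mem_insert_of_mem (Finset.mem_image.mpr
      ⟨_, Finset.mem_powerset.mpr (Finset.filter_subset _ _), rfl⟩)
  · exact Finset.mem_insert_self _ _

lemma betaVals_pos (bs : ℕ → ℝ) (m : ℕ) (hbk : ∀ k, 1 ≤ k → k ≤ m → -1 < bs k) :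
    ∀ y ∈ betaVals bs m, 0 < y := by
  intro y hy
  rcases Finset.mem_insert.mp hy with h | h
  · simp [h]
  · obtain ⟨u, hu, rfl⟩ := Finset.mem_image.mp h
    refine Finset.prod_pos fun k hk => ?_
    have hk' := Finset.mem_powerset.mp hu hk
    have := hbk k (Finset.mem_Icc.mp hk').1 (Finset.mem_Icc.mp hk').2
    linarith

lemma impBeta_pos (ts bs : ℕ → ℝ) (m : ℕ) (T δ s : ℝ)
    (hbk : ∀ k, 1 ≤ k → k ≤ m → -1 < bs k) : 0 < impBeta ts bs m T δ s :=
  betaVals_pos bs m hbk _ (impBeta_mem_betaVals ts bs m T δ s)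


lemma impBeta_eventually_const_left (ts bs : ℕ → ℝ) (m : ℕ) (T δ : ℝ) (s0 : ℝ) :
    ∃ c : ℝ, ∀ᶠ s in nhdsWithin s0 (Set.Iio s0), impBeta ts bs m T δ s = c := by
  classical
  set BP : Finset ℝ := insert (T - δ) (insert (ts 1) ((Finset.Icc 1 m).image ts)) with hBP
  by_cases hLne : (BP.filter (fun p => p < s0)).Nonempty
  · set L : Finset ℝ := BP.filter (fun p => p < s0) with hL
    set a := L.max' hLne with ha
    have haBP : a ∈ BP ∧ a < s0 := Finset.mem_filter.mp (L.max'_mem hLne)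
    have key : ∀ p ∈ BP, ∀ s ∈ Set.Ioo a s0, ((p < s ↔ p < s0) ∧ (s < p ↔ s0 ≤ p)) := by
      intro p hp s hs
      by_cases hps : p < s0
      · have hpa : p ≤ a := L.le_max' p (Finset.mem_filter.mpr ⟨hp, hps⟩)
        constructor
        · constructor
          · intro _; exact hps
          · intro _; exact lt_of_le_of_lt hpa hs.1
        · constructor
          · intro h; exfalso; have := hs.1; linarith
          · intro h; exfalso; linarith
      · push_neg at hps
        constructor
        · constructor
          · intro h; exfalso; have := hs.2; linarith
          · intro h; exfalso; linarith
        · constructor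
          · intro _; exact hps
          · intro _; exact hs.2.trans_le hps
    refine ⟨if ts 1 < s0 ∧ s0 ≤ T - δ then
        ∏ k ∈ (Finset.Icc 1 m).filter (fun k => ts k < s0), (1 + bs k) else 1, ?_⟩
    have hmem : Set.Ioo a s0 ∈ nhdsWithin s0 (Set.Iio s0) := by
      refine mem_nhdsWithin.mpr ⟨Set.Ioi a, isOpen_Ioi, haBP.2, ?_⟩
      intro s hs; exact ⟨hs.1, hs.2⟩
    filter_upwards [hmem] with s hs
    have h1 : ts 1 < s ↔ ts 1 < s0 :=
      (key (ts 1) (by simp [hBP]) s hs).1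
    have h2 : s < T - δ ↔ s0 ≤ T - δ :=
      (key (T - δ) (by simp [hBP]) s hs).2
    have h3 : (Finset.Icc 1 m).filter (fun k => ts k < s)
        = (Finset.Icc 1 m).filter (fun k => ts k < s0) := by
      apply Finset.filter_congr
      intro k hk
      exact (key (ts k) (by
        rw [hBP]; simp only [Finset.mem_insert, Finset.mem_image]
        right; right; exact ⟨k, hk, rfl⟩) s hs).1
    unfold impBeta
    by_cases hc : ts 1 < s0 ∧ s0 ≤ T - δ
    · rw [if_pos ⟨h1.mpr hc.1, h2.mpr hc.2⟩, if_pos hc, h3]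
    · rw [if_neg (fun hh => hc ⟨h1.mp hh.1, h2.mp hh.2⟩), if_neg hc]
  · refine ⟨1, ?_⟩
    filter_upwards [self_mem_nhdsWithin] with s hs
    have hts : ¬ ts 1 < s := by
      intro h
      exact hLne ⟨ts 1, Finset.mem_filter.mpr ⟨by simp [hBP], h.trans hs⟩⟩
    unfold impBeta
    rw [if_neg (fun hc => hts hc.1)]

lemma impBeta_eventually_const_right (ts bs : ℕ → ℝ) (m : ℕ) (T δ : ℝ) (s0 : ℝ) :
    ∃ c : ℝ, ∀ᶠ s in nhdsWithin s0 (Set.Ioi s0), impBeta ts bs m T δ s = c := by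
  classical
  set BP : Finset ℝ := insert (T - δ) (insert (ts 1) ((Finset.Icc 1 m).image ts)) with hBP
  by_cases hUne : (BP.filter (fun p => s0 < p)).Nonempty
  · set U : Finset ℝ := BP.filter (fun p => s0 < p) with hU
    set a := U.min' hUne with ha
    have haBP : a ∈ BP ∧ s0 < a := Finset.mem_filter.mp (U.min'_mem hUne)
    have key : ∀ p ∈ BP, ∀ s ∈ Set.Ioo s0 a, ((p < s ↔ p ≤ s0) ∧ (s < p ↔ s0 < p)) := by
      intro p hp s hs
      by_cases hps : s0 < p
      · have hpa : a ≤ p := U.min'_le p (Finset.mem_filter.mpr ⟨hp, hps⟩)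
        constructor
        · constructor
          · intro h; exfalso; have := hs.2; linarith
          · intro h; exfalso; linarith
        · constructor
          · intro _; exact hps
          · intro _; exact hs.2.trans_le hpa
      · push_neg at hps
        constructor
        · constructor
          · intro _; exact hps
          · intro _; exact hps.trans_lt hs.1
        · constructor
          · intro h; exfalso; have := hs.1; linarith
          · intro h; exfalso; linarith
    refine ⟨if ts 1 ≤ s0 ∧ s0 < T - δ then
        ∏ k ∈ (Finset.Icc 1 m).filter (fun k => ts k ≤ s0), (1 + bs k) else 1, ?_⟩
    have hmem : Set.Ioo s0 a ∈ nhdsWithin s0 (Set.Ioi s0) := by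
      refine mem_nhdsWithin.mpr ⟨Set.Iio a, isOpen_Iio, haBP.2, ?_⟩
      intro s hs; exact ⟨hs.2, hs.1⟩
    filter_upwards [hmem] with s hs
    have h1 : ts 1 < s ↔ ts 1 ≤ s0 :=
      (key (ts 1) (by simp [hBP]) s hs).1
    have h2 : s < T - δ ↔ s0 < T - δ :=
      (key (T - δ) (by simp [hBP]) s hs).2
    have h3 : (Finset.Icc 1 m).filter (fun k => ts k < s)
        = (Finset.Icc 1 m).filter (fun k => ts k ≤ s0) := by
      apply Finset.filter_congr
      intro k hk
      exact (key (ts k) (by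
        rw [hBP]; simp only [Finset.mem_insert, Finset.mem_image]
        right; right; exact ⟨k, hk, rfl⟩) s hs).1
    unfold impBeta
    by_cases hc : ts 1 ≤ s0 ∧ s0 < T - δ
    · rw [if_pos ⟨h1.mpr hc.1, h2.mpr hc.2⟩, if_pos hc, h3]
    · rw [if_neg (fun hh => hc ⟨h1.mp hh.1, h2.mp hh.2⟩), if_neg hc]
  · refine ⟨1, ?_⟩
    filter_upwards [self_mem_nhdsWithin] with s hs
    have hTd : ¬ s < T - δ := by
      intro h
      exact hUne ⟨T - δ, Finset.mem_filter.mpr ⟨by simp [hBP], hs.trans h⟩⟩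
    unfold impBeta
    rw [if_neg (fun hc => hTd hc.2)]



lemma regulatedOn_of_continuousOn {φ : ℝ → ℝ} {a b : ℝ} (h : ContinuousOn φ (Set.Icc a b)) :
    RegulatedOn φ a b := by
  constructor
  · intro τ hτ
    refine ⟨φ τ, Filter.Tendsto.mono_left (h τ ⟨hτ.1.le, hτ.2⟩) (nhdsWithin_mono _ ?_)⟩
    intro s hs; exact ⟨hs.1, hs.2.le.trans hτ.2⟩
  · intro τ hτ
    refine ⟨φ τ, Filter.Tendsto.mono_left (h τ ⟨hτ.1, hτ.2.le⟩) (nhdsWithin_mono _ ?_)⟩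
    intro s hs; exact ⟨hτ.1.trans hs.1.le, hs.2⟩

lemma continuousOn_pext (T : ℝ) (x : ℝ → ℝ) (hT : 0 < T)
    (hx : ContinuousOn x (Set.Icc 0 T)) (hper : x 0 = x T) :
    ContinuousOn (pext T x) (Set.Icc (-T) T) := by
  intro s hs
  rcases lt_trichotomy s 0 with h | h | h
  · have base : ContinuousWithinAt (fun s' => x (s' + T)) (Set.Icc (-T) T ∩ Set.Iio 0) s := by
      refine ContinuousWithinAt.comp (hx (s + T) ⟨by linarith [hs.1], by linarith⟩)
        ((continuous_id.add continuous_const).continuousWithinAt) ?_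
      intro u hu
      have h1 : -T ≤ u := hu.1.1
      have h2 : u < 0 := hu.2
      simp only [Set.mem_Icc]
      constructor <;> linarith
    have : ContinuousWithinAt (pext T x) (Set.Icc (-T) T ∩ Set.Iio 0) s :=
      base.congr (fun y hy => by simp only [pext, if_pos (show y < (0:ℝ) from hy.2)])
        (by simp only [pext, if_pos h])
    exact (continuousWithinAt_inter (Iio_mem_nhds h)).mp this
  · subst h
    have h0 : pext T x 0 = x 0 := by simp [pext]
    unfold ContinuousWithinAt
    rw [h0]
    have hsplit : Set.Icc (-T) T = (Set.Icc (-T) T ∩ Set.Iio 0) ∪ (Set.Icc (-T) T ∩ Set.Ici 0) := by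
      rw [← Set.inter_union_distrib_left, Set.Iio_union_Ici, Set.inter_univ]
    rw [hsplit, nhdsWithin_union, Filter.tendsto_sup]
    constructor
    · have hev : ∀ᶠ y in nhdsWithin 0 (Set.Icc (-T) T ∩ Set.Iio 0),
          pext T x y = x (y + T) := by
        filter_upwards [self_mem_nhdsWithin] with y hy
        simp only [pext, if_pos (show y < (0:ℝ) from hy.2)]
      rw [Filter.tendsto_congr' hev]
      have hmap : Filter.Tendsto (fun y : ℝ => y + T)
          (nhdsWithin 0 (Set.Icc (-T) T ∩ Set.Iio 0)) (nhdsWithin T (Set.Icc 0 T)) := by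
        have hcw : ContinuousWithinAt (fun y : ℝ => y + T) (Set.Icc (-T) T ∩ Set.Iio 0) 0 :=
          (continuous_id.add continuous_const).continuousWithinAt
        have hmt : Set.MapsTo (fun y : ℝ => y + T) (Set.Icc (-T) T ∩ Set.Iio 0) (Set.Icc 0 T) := by
          intro u hu
          have h1 : -T ≤ u := hu.1.1
          have h2 : u < 0 := hu.2
          simp only [Set.mem_Icc]
          constructor <;> linarith
        have h' := hcw.tendsto_nhdsWithin hmt
        simpa using h'
      have := (hx T ⟨hT.le, le_refl T⟩).tendsto.comp hmap
      rw [← hper] at this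
      exact this
    · have hev : ∀ᶠ y in nhdsWithin 0 (Set.Icc (-T) T ∩ Set.Ici 0),
          pext T x y = x y := by
        filter_upwards [self_mem_nhdsWithin] with y hy
        simp only [pext, if_neg (not_lt.mpr (show (0:ℝ) ≤ y from hy.2))]
      rw [Filter.tendsto_congr' hev]
      refine (hx 0 ⟨by linarith, hT.le⟩).tendsto.mono_left (nhdsWithin_mono _ ?_)
      intro u hu; exact ⟨hu.2, hu.1.2⟩
  · have base : ContinuousWithinAt x (Set.Icc (-T) T ∩ Set.Ioi 0) s := by
      refine (hx s ⟨h.le, hs.2⟩).mono ?_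
      intro u hu; exact ⟨hu.2.le, hu.1.2⟩
    have : ContinuousWithinAt (pext T x) (Set.Icc (-T) T ∩ Set.Ioi 0) s :=
      base.congr (fun y hy => by simp only [pext, if_neg (not_lt.mpr (show (0:ℝ) ≤ y from hy.2.le))])
        (by simp only [pext, if_neg (not_lt.mpr h.le)])
    exact (continuousWithinAt_inter (Ioi_mem_nhds h)).mp this
lemma regulatedOn_pext_shift (T r t : ℝ) (x : ℝ → ℝ)
    (hpc : ContinuousOn (pext T x) (Set.Icc (-T) T)) (ht : t ∈ Set.Icc 0 T)
    (hr0 : 0 < r) (hrT : r ≤ T) :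
    RegulatedOn (fun τ => pext T x (t + τ)) (-r) 0 := by
  apply regulatedOn_of_continuousOn
  refine ContinuousOn.comp hpc ((continuous_const.add continuous_id).continuousOn) ?_
  intro τ hτ
  have h1 : -r ≤ τ := hτ.1
  have h2 : τ ≤ 0 := hτ.2
  have h3 : 0 ≤ t := ht.1
  have h4 : t ≤ T := ht.2
  simp only [Set.mem_Icc]
  constructor <;> linarith

lemma regulatedOn_beta_mul (ts bs : ℕ → ℝ) (m : ℕ) (T δ r t : ℝ) (x : ℝ → ℝ)
    (hpc : ContinuousOn (pext T x) (Set.Icc (-T) T)) (ht : t ∈ Set.Icc 0 T)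
    (hr0 : 0 < r) (hrT : r ≤ T) :
    RegulatedOn (fun τ => impBeta ts bs m T δ (t + τ) * pext T x (t + τ)) (-r) 0 := by
  have h3 : 0 ≤ t := ht.1
  have h4 : t ≤ T := ht.2
  constructor
  · intro τ0 hτ0
    obtain ⟨c, hc⟩ := impBeta_eventually_const_left ts bs m T δ (t + τ0)
    have htr : Filter.Tendsto (fun τ : ℝ => t + τ) (nhdsWithin τ0 (Set.Ico (-r) τ0))
        (nhdsWithin (t + τ0) (Set.Iio (t + τ0))) := by
      refine ContinuousWithinAt.tendsto_nhdsWithin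
        ((continuous_const.add continuous_id).continuousWithinAt) ?_
      intro s hs
      have : s < τ0 := hs.2
      simp only [Set.mem_Iio]; linarith
    have hβ : Filter.Tendsto (fun τ => impBeta ts bs m T δ (t + τ))
        (nhdsWithin τ0 (Set.Ico (-r) τ0)) (nhds c) := by
      have hev : (fun τ => impBeta ts bs m T δ (t + τ))
          =ᶠ[nhdsWithin τ0 (Set.Ico (-r) τ0)] (fun _ => c) := htr.eventually hc
      exact Filter.Tendsto.congr' hev.symm tendsto_const_nhds
    have hxx : Filter.Tendsto (fun τ => pext T x (t + τ))
        (nhdsWithin τ0 (Set.Ico (-r) τ0)) (nhds (pext T x (t + τ0))) := by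
      have h1 : ContinuousWithinAt (pext T x) (Set.Icc (-T) T) (t + τ0) :=
        hpc _ ⟨by linarith [hτ0.1], by linarith [hτ0.2]⟩
      have htr2 : Filter.Tendsto (fun τ : ℝ => t + τ) (nhdsWithin τ0 (Set.Ico (-r) τ0))
          (nhdsWithin (t + τ0) (Set.Icc (-T) T)) := by
        refine ContinuousWithinAt.tendsto_nhdsWithin
          ((continuous_const.add continuous_id).continuousWithinAt) ?_
        intro s hs
        have h5 : -r ≤ s := hs.1
        have h6 : s < τ0 := hs.2
        have h7 : τ0 ≤ 0 := hτ0.2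
        simp only [Set.mem_Icc]; constructor <;> linarith
      exact h1.tendsto.comp htr2
    exact ⟨c * pext T x (t + τ0), hβ.mul hxx⟩
  · intro τ0 hτ0
    obtain ⟨c, hc⟩ := impBeta_eventually_const_right ts bs m T δ (t + τ0)
    have htr : Filter.Tendsto (fun τ : ℝ => t + τ) (nhdsWithin τ0 (Set.Ioc τ0 0))
        (nhdsWithin (t + τ0) (Set.Ioi (t + τ0))) := by
      refine ContinuousWithinAt.tendsto_nhdsWithin
        ((continuous_const.add continuous_id).continuousWithinAt) ?_
      intro s hs
      have : τ0 < s := hs.1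
      simp only [Set.mem_Ioi]; linarith
    have hβ : Filter.Tendsto (fun τ => impBeta ts bs m T δ (t + τ))
        (nhdsWithin τ0 (Set.Ioc τ0 0)) (nhds c) := by
      have hev : (fun τ => impBeta ts bs m T δ (t + τ))
          =ᶠ[nhdsWithin τ0 (Set.Ioc τ0 0)] (fun _ => c) := htr.eventually hc
      exact Filter.Tendsto.congr' hev.symm tendsto_const_nhds
    have hxx : Filter.Tendsto (fun τ => pext T x (t + τ))
        (nhdsWithin τ0 (Set.Ioc τ0 0)) (nhds (pext T x (t + τ0))) := by
      have h1 : ContinuousWithinAt (pext T x) (Set.Icc (-T) T) (t + τ0) :=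
        hpc _ ⟨by linarith [hτ0.1], by linarith [hτ0.2]⟩
      have htr2 : Filter.Tendsto (fun τ : ℝ => t + τ) (nhdsWithin τ0 (Set.Ioc τ0 0))
          (nhdsWithin (t + τ0) (Set.Icc (-T) T)) := by
        refine ContinuousWithinAt.tendsto_nhdsWithin
          ((continuous_const.add continuous_id).continuousWithinAt) ?_
        intro s hs
        have h5 : τ0 < s := hs.1
        have h6 : s ≤ 0 := hs.2
        have h7 : -r ≤ τ0 := hτ0.1
        simp only [Set.mem_Icc]; constructor <;> linarith
      exact h1.tendsto.comp htr2
    exact ⟨c * pext T x (t + τ0), hβ.mul hxx⟩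

lemma regulatedOn_zero (a b : ℝ) : RegulatedOn (fun _ => (0:ℝ)) a b :=
  ⟨fun τ _ => ⟨0, tendsto_const_nhds⟩, fun τ _ => ⟨0, tendsto_const_nhds⟩⟩
lemma pext_comp (T : ℝ) (u : ℝ → ℝ) (F : ℝ → ℝ) (s : ℝ) :
    pext T (fun y => F (u y)) s = F (pext T u s) := by
  unfold pext; split <;> rfl

lemma pext_apply_neg {T : ℝ} {u : ℝ → ℝ} {s : ℝ} (hs : s < 0) :
    pext T u s = u (s + T) := by simp [pext, hs]

lemma pext_apply_nonneg {T : ℝ} {u : ℝ → ℝ} {s : ℝ} (hs : 0 ≤ s) :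
    pext T u s = u s := by simp [pext, not_lt.mpr hs]

lemma ae_ne_real (c : ℝ) : ∀ᵐ t : ℝ ∂volume, t ≠ c := by
  refine MeasureTheory.ae_iff.mpr ?_
  have : {a : ℝ | ¬a ≠ c} = {c} := by ext a; simp
  rw [this]
  exact measure_singleton c

lemma pext_shift_integrableOn (T δ : ℝ) (u : ℝ → ℝ) (hδ0 : 0 ≤ δ) (hδT : δ ≤ T)
    (hu : MeasureTheory.IntegrableOn u (Set.Icc 0 T)) :
    MeasureTheory.IntegrableOn (fun t => pext T u (t - δ)) (Set.Icc 0 T) := by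
  have hu1 : MeasureTheory.IntegrableOn u (Set.Icc (T - δ) T) :=
    hu.mono_set (Set.Icc_subset_Icc (by linarith) le_rfl)
  have hu2 : MeasureTheory.IntegrableOn u (Set.Icc 0 (T - δ)) :=
    hu.mono_set (Set.Icc_subset_Icc le_rfl (by linarith))
  have hu1' : IntervalIntegrable u volume (T - δ) T := by
    apply MeasureTheory.IntegrableOn.intervalIntegrable
    rwa [Set.uIcc_of_le (show T - δ ≤ T by linarith)]
  have hu2' : IntervalIntegrable u volume 0 (T - δ) := by
    apply MeasureTheory.IntegrableOn.intervalIntegrable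
    rwa [Set.uIcc_of_le (show (0:ℝ) ≤ T - δ by linarith)]
  have hA : IntervalIntegrable (fun t => u (t + (T - δ))) volume 0 δ := by
    have := hu1'.comp_add_right (T - δ)
    rwa [sub_self, sub_sub_cancel] at this
  have hB : IntervalIntegrable (fun t => u (t - δ)) volume δ T := by
    have := hu2'.comp_sub_right δ
    rwa [zero_add, sub_add_cancel] at this
  have hP1 : MeasureTheory.IntegrableOn (fun t => pext T u (t - δ)) (Set.Ioc 0 δ) := by
    have hAe : MeasureTheory.IntegrableOn (fun t => u (t + (T - δ))) (Set.Ioc 0 δ) :=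
      hA.1
    refine hAe.congr_fun_ae ?_
    apply (MeasureTheory.ae_restrict_iff' measurableSet_Ioc).mpr
    filter_upwards [ae_ne_real δ] with t ht hmem
    have htδ : t < δ := lt_of_le_of_ne hmem.2 ht
    rw [pext_apply_neg (by linarith)]
    congr 1; ring
  have hP2 : MeasureTheory.IntegrableOn (fun t => pext T u (t - δ)) (Set.Ioc δ T) := by
    have hBe : MeasureTheory.IntegrableOn (fun t => u (t - δ)) (Set.Ioc δ T) := hB.1
    refine hBe.congr_fun_ae ?_
    apply (MeasureTheory.ae_restrict_iff' measurableSet_Ioc).mpr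
    filter_upwards with t hmem
    rw [pext_apply_nonneg (by linarith [hmem.1])]
  have : MeasureTheory.IntegrableOn (fun t => pext T u (t - δ)) (Set.Ioc 0 T) := by
    have := hP1.union hP2
    rwa [Set.Ioc_union_Ioc_eq_Ioc hδ0 hδT] at this
  rwa [integrableOn_Icc_iff_integrableOn_Ioc]

lemma pext_shift_integral (T δ : ℝ) (u : ℝ → ℝ) (hδ0 : 0 ≤ δ) (hδT : δ ≤ T)
    (hu : MeasureTheory.IntegrableOn u (Set.Icc 0 T)) :
    (∫ t in (0:ℝ)..T, pext T u (t - δ)) = ∫ t in (0:ℝ)..T, u t := by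
  have hu1 : MeasureTheory.IntegrableOn u (Set.Icc (T - δ) T) :=
    hu.mono_set (Set.Icc_subset_Icc (by linarith) le_rfl)
  have hu2 : MeasureTheory.IntegrableOn u (Set.Icc 0 (T - δ)) :=
    hu.mono_set (Set.Icc_subset_Icc le_rfl (by linarith))
  have hu1' : IntervalIntegrable u volume (T - δ) T := by
    apply MeasureTheory.IntegrableOn.intervalIntegrable
    rwa [Set.uIcc_of_le (show T - δ ≤ T by linarith)]
  have hu2' : IntervalIntegrable u volume 0 (T - δ) := by
    apply MeasureTheory.IntegrableOn.intervalIntegrable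
    rwa [Set.uIcc_of_le (show (0:ℝ) ≤ T - δ by linarith)]
  have hA : IntervalIntegrable (fun t => u (t + (T - δ))) volume 0 δ := by
    have := hu1'.comp_add_right (T - δ)
    rwa [sub_self, sub_sub_cancel] at this
  have hB : IntervalIntegrable (fun t => u (t - δ)) volume δ T := by
    have := hu2'.comp_sub_right δ
    rwa [zero_add, sub_add_cancel] at this
  have hI1 : (∫ t in (0:ℝ)..δ, pext T u (t - δ)) = ∫ t in (0:ℝ)..δ, u (t + (T - δ)) := by
    apply intervalIntegral.integral_congr_ae
    filter_upwards [ae_ne_real δ] with t ht hmem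
    rw [Set.uIoc_of_le hδ0] at hmem
    have htδ : t < δ := lt_of_le_of_ne hmem.2 ht
    rw [pext_apply_neg (by linarith)]
    congr 1; ring
  have hI2 : (∫ t in δ..T, pext T u (t - δ)) = ∫ t in δ..T, u (t - δ) := by
    apply intervalIntegral.integral_congr
    intro t hmem
    rw [Set.uIcc_of_le hδT] at hmem
    exact pext_apply_nonneg (by linarith [hmem.1])
  have hP1 : IntervalIntegrable (fun t => pext T u (t - δ)) volume 0 δ := by
    constructor
    · refine hA.1.congr_fun_ae ?_
      apply (MeasureTheory.ae_restrict_iff' measurableSet_Ioc).mpr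
      filter_upwards [ae_ne_real δ] with t ht hmem
      have htδ : t < δ := lt_of_le_of_ne hmem.2 ht
      rw [pext_apply_neg (by linarith)]
      congr 1; ring
    · refine hA.2.congr_fun_ae ?_
      apply (MeasureTheory.ae_restrict_iff' measurableSet_Ioc).mpr
      filter_upwards with t hmem
      exfalso
      have := hmem.1
      have := hmem.2
      linarith
  have hP2 : IntervalIntegrable (fun t => pext T u (t - δ)) volume δ T := by
    constructor
    · refine hB.1.congr_fun_ae ?_
      apply (MeasureTheory.ae_restrict_iff' measurableSet_Ioc).mpr
      filter_upwards with t hmem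
      rw [pext_apply_nonneg (by linarith [hmem.1])]
    · refine hB.2.congr_fun_ae ?_
      apply (MeasureTheory.ae_restrict_iff' measurableSet_Ioc).mpr
      filter_upwards with t hmem
      exfalso
      have h1 := hmem.1
      have h2 := hmem.2
      linarith
  calc (∫ t in (0:ℝ)..T, pext T u (t - δ))
      = (∫ t in (0:ℝ)..δ, pext T u (t - δ)) + ∫ t in δ..T, pext T u (t - δ) :=
        (intervalIntegral.integral_add_adjacent_intervals hP1 hP2).symm
    _ = (∫ t in (0:ℝ)..δ, u (t + (T - δ))) + ∫ t in δ..T, u (t - δ) := by rw [hI1, hI2]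
    _ = (∫ t in (T - δ)..T, u t) + ∫ t in (0:ℝ)..(T - δ), u t := by
        rw [intervalIntegral.integral_comp_add_right u (T - δ),
          intervalIntegral.integral_comp_sub_right u δ]
        norm_num
    _ = ∫ t in (0:ℝ)..T, u t := by
        rw [add_comm]
        exact intervalIntegral.integral_add_adjacent_intervals hu2' hu1'
lemma pext_shift_null (T δ : ℝ) (u : ℝ → ℝ) (hδ0 : 0 ≤ δ) (hδT : δ ≤ T)
    (h : ∀ᵐ t : ℝ ∂volume, t ∈ Set.Icc 0 T → u t = 0) :
    ∀ᵐ t : ℝ ∂volume, t ∈ Set.Icc 0 T → pext T u (t - δ) = 0 := by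
  rw [MeasureTheory.ae_iff] at h ⊢
  have hsub : {t : ℝ | ¬(t ∈ Set.Icc 0 T → pext T u (t - δ) = 0)} ⊆
      ((fun t : ℝ => t - δ) ⁻¹' {t | ¬(t ∈ Set.Icc 0 T → u t = 0)}) ∪
      ((fun t : ℝ => t + (T - δ)) ⁻¹' {t | ¬(t ∈ Set.Icc 0 T → u t = 0)}) := by
    intro t ht
    rw [Set.mem_setOf_eq, _root_.not_imp] at ht
    obtain ⟨hmem, hne⟩ := ht
    have h0 : (0:ℝ) ≤ t := hmem.1
    have h1 : t ≤ T := hmem.2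
    by_cases hcase : t - δ < 0
    · right
      rw [Set.mem_preimage, Set.mem_setOf_eq, _root_.not_imp]
      constructor
      · constructor <;> [linarith; linarith]
      · intro h'
        apply hne
        rw [pext_apply_neg hcase]
        rw [show t - δ + T = t + (T - δ) by ring]
        exact h'
    · left
      rw [Set.mem_preimage, Set.mem_setOf_eq, _root_.not_imp]
      push_neg at hcase
      constructor
      · constructor <;> [linarith; linarith]
      · intro h'
        apply hne
        rw [pext_apply_nonneg hcase]
        exact h'
  refine MeasureTheory.measure_mono_null hsub (MeasureTheory.measure_union_null ?_ ?_)
  · exact (MeasureTheory.measurePreserving_sub_right volume δ).quasiMeasurePreserving.preimage_null h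
  · exact (MeasureTheory.measurePreserving_add_right volume (T - δ)).quasiMeasurePreserving.preimage_null h

lemma core_zero (T δ q : ℝ) (g : ℝ → ℝ) (hT : 0 < T) (hδ0 : 0 ≤ δ) (hδT : δ ≤ T)
    (hq0 : 0 ≤ q) (hq1 : q < 1)
    (hg : MeasureTheory.IntegrableOn g (Set.Icc 0 T))
    (hzero : (∫ t in (0:ℝ)..T, g t) = 0)
    (hae : ∀ᵐ t : ℝ ∂volume, t ∈ Set.Icc 0 T → -(g t) ≤ q * max (pext T g (t - δ)) 0) :
    ∀ᵐ t : ℝ ∂volume, t ∈ Set.Icc 0 T → g t = 0 := by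
  set gp : ℝ → ℝ := fun t => max (g t) 0 with hgp_def
  set gm : ℝ → ℝ := fun t => max (-g t) 0 with hgm_def
  have hgp : MeasureTheory.IntegrableOn gp (Set.Icc 0 T) := by
    have := hg.pos_part
    simpa [hgp_def, IntegrableOn] using this
  have hgm : MeasureTheory.IntegrableOn gm (Set.Icc 0 T) := by
    have := hg.neg.pos_part
    simpa [hgm_def, IntegrableOn] using this
  have hpextgp : MeasureTheory.IntegrableOn (fun t => pext T gp (t - δ)) (Set.Icc 0 T) :=
    pext_shift_integrableOn T δ gp hδ0 hδT hgp
  have hmaxeq : ∀ t : ℝ, max (pext T g (t - δ)) 0 = pext T gp (t - δ) := by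
    intro t
    rw [hgp_def, pext_comp T g (fun y => max y 0)]
  -- integral inequality
  have hmono : (∫ t in Set.Icc 0 T, gm t) ≤ ∫ t in Set.Icc 0 T, q * pext T gp (t - δ) := by
    refine MeasureTheory.setIntegral_mono_ae_restrict hgm (hpextgp.const_mul q) ?_
    apply (MeasureTheory.ae_restrict_iff' measurableSet_Icc).mpr
    filter_upwards [hae] with t ht hmem
    have h1 := ht hmem
    rw [hmaxeq t] at h1
    have h2 : 0 ≤ pext T gp (t - δ) := by
      rw [← hmaxeq t]; exact le_max_right _ _
    have : 0 ≤ q * pext T gp (t - δ) := mul_nonneg hq0 h2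
    simp only [hgm_def]
    exact max_le h1 this
  have hshift : (∫ t in Set.Icc 0 T, pext T gp (t - δ)) = ∫ t in Set.Icc 0 T, gp t := by
    rw [MeasureTheory.integral_Icc_eq_integral_Ioc, MeasureTheory.integral_Icc_eq_integral_Ioc,
      ← intervalIntegral.integral_of_le hT.le, ← intervalIntegral.integral_of_le hT.le]
    exact pext_shift_integral T δ gp hδ0 hδT hgp
  have hsplit : (∫ t in Set.Icc 0 T, gp t) - (∫ t in Set.Icc 0 T, gm t) = 0 := by
    have hsub : (∫ t in Set.Icc 0 T, (gp t - gm t)) = (∫ t in Set.Icc 0 T, gp t) - ∫ t in Set.Icc 0 T, gm t :=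
      MeasureTheory.integral_sub hgp hgm
    have heqfun : ∀ t, gp t - gm t = g t := by
      intro t
      simp only [hgp_def, hgm_def]
      rcases le_total (g t) 0 with h | h
      · rw [max_eq_right h, max_eq_left (by linarith)]; ring
      · rw [max_eq_left h, max_eq_right (by linarith)]; ring
    rw [← hsub]
    simp only [heqfun]
    rw [MeasureTheory.integral_Icc_eq_integral_Ioc, ← intervalIntegral.integral_of_le hT.le]
    exact hzero
  have hgmnn : 0 ≤ ∫ t in Set.Icc 0 T, gm t :=
    MeasureTheory.setIntegral_nonneg measurableSet_Icc (fun t _ => le_max_right _ _)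
  have hconst : (∫ t in Set.Icc 0 T, q * pext T gp (t - δ)) = q * ∫ t in Set.Icc 0 T, pext T gp (t - δ) :=
    MeasureTheory.integral_const_mul q _
  have hP : (∫ t in Set.Icc 0 T, gm t) = 0 := by
    have h1 : (∫ t in Set.Icc 0 T, gm t) ≤ q * ∫ t in Set.Icc 0 T, gm t := by
      calc (∫ t in Set.Icc 0 T, gm t) ≤ ∫ t in Set.Icc 0 T, q * pext T gp (t - δ) := hmono
        _ = q * ∫ t in Set.Icc 0 T, pext T gp (t - δ) := hconst
        _ = q * ∫ t in Set.Icc 0 T, gp t := by rw [hshift]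
        _ = q * ∫ t in Set.Icc 0 T, gm t := by
            congr 1
            linarith [hsplit]
    nlinarith
  have hPp : (∫ t in Set.Icc 0 T, gp t) = 0 := by linarith [hsplit]
  have habs : (∫ t in Set.Icc 0 T, (gp t + gm t)) = 0 := by
    rw [MeasureTheory.integral_add hgp hgm, hP, hPp]; ring
  have hzero_ae : (fun t => gp t + gm t) =ᶠ[MeasureTheory.ae (volume.restrict (Set.Icc 0 T))] 0 := by
    refine (MeasureTheory.setIntegral_eq_zero_iff_of_nonneg_ae ?_ ?_).mp habs
    · apply (MeasureTheory.ae_restrict_iff' measurableSet_Icc).mpr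
      filter_upwards with t _
      have := le_max_right (g t) 0
      have := le_max_right (-g t) 0
      simp only [Pi.zero_apply, hgp_def, hgm_def]
      positivity
    · exact hgp.add hgm
  have := (MeasureTheory.ae_restrict_iff' measurableSet_Icc).mp hzero_ae
  filter_upwards [this] with t ht hmem
  have h1 := ht hmem
  simp only [hgp_def, hgm_def, Pi.zero_apply] at h1
  have h2 := le_max_right (g t) 0
  have h3 := le_max_right (-g t) 0
  have h4 : max (g t) 0 = 0 ∧ max (-g t) 0 = 0 := by constructor <;> linarith
  have h5 := le_max_left (g t) 0
  have h6 := le_max_left (-g t) 0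
  rw [h4.1] at h5
  rw [h4.2] at h6
  linarith

set_option maxHeartbeats 1000000 in
/-- Uniform a priori bound, independent of `λ`: any periodic solution of `Lx = λ Nx`
satisfies `‖x‖_∞ ≤ D := d + (b·d·k₀ + S)·T/(k₀ - b·T·k₀ - B·K₀)`. -/
theorem statement9
    (B r δ T : ℝ) (m : ℕ) (ts bs : ℕ → ℝ) (f : ℝ → (ℝ → ℝ) → ℝ)
    (hδ0 : 0 ≤ δ) (hδr : δ < r) (hrT : r ≤ T) (hB0 : 0 ≤ B)
    (hm : 1 ≤ m) (ht1 : 0 < ts 1)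
    (htmono : ∀ k, 1 ≤ k → k < m → ts k < ts (k + 1))
    (htm : ts m < T - δ)
    (hbk : ∀ k, 1 ≤ k → k ≤ m → -1 < bs k)
    (k0 K0 : ℝ)
    (hk0 : k0 = sInf (impBeta ts bs m T δ '' Set.Icc (-r) T))
    (hK0 : K0 = sSup (impBeta ts bs m T δ '' Set.Icc (-r) T))
    (hH1 : ∀ φ : ℝ → ℝ, (∃ gφ : ℝ → ℝ, AbsContOn φ gφ (-r) 0) →
      ContinuousOn (fun t => f t (fun τ => impBeta ts bs m T δ (t + τ) * φ τ)) (Set.Icc 0 T))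
    (d : ℝ) (hd : 0 < d)
    (hH2 : ∀ φ : ℝ → ℝ, RegulatedOn φ (-r) 0 → d ≤ |φ 0| →
      ∀ t ∈ Set.Icc 0 T, 0 < φ 0 * f t (fun τ => impBeta ts bs m T δ (t + τ) * φ τ))
    (hH3 : B < k0 / K0)
    (b : ℝ) (hb0 : 0 < b) (hbb : b < (k0 - B * K0) / (T * k0))
    (hH4 : ∀ φ ψ : ℝ → ℝ, RegulatedOn φ (-r) 0 → RegulatedOn ψ (-r) 0 →
      ∀ t ∈ Set.Icc 0 T, |f t φ - f t ψ| ≤ b * |φ 0 - ψ 0|)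
    (S : ℝ) (hS : 0 < S)
    (hfS : ∀ t ∈ Set.Icc (0:ℝ) T, |f t (fun _ => (0:ℝ))| ≤ S)
    (lam : ℝ) (hlam0 : 0 < lam) (hlam1 : lam < 1)
    (x g : ℝ → ℝ)
    (hAC : AbsContOn x g 0 T) (hper : x 0 = x T)
    (heq : ∀ᵐ t ∂volume, t ∈ Set.Icc 0 T →
      g t + B * impBeta ts bs m T δ (t - δ) * pext T g (t - δ) / impBeta ts bs m T δ t
        = lam * f t (fun τ => impBeta ts bs m T δ (t + τ) * pext T x (t + τ)) / impBeta ts bs m T δ t)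
    :
    ∀ t ∈ Set.Icc (0:ℝ) T,
      |x t| ≤ d + (b * d * k0 + S) * T / (k0 - b * T * k0 - B * K0) := by
  intro t ht
  have hr0 : 0 < r := lt_of_le_of_lt hδ0 hδr
  have hT0 : 0 < T := lt_of_lt_of_le hr0 hrT
  have hδT : δ ≤ T := by linarith
  have hβpos : ∀ s, 0 < impBeta ts bs m T δ s := fun s => impBeta_pos ts bs m T δ s hbk
  -- bounds via k0, K0
  have hne : (impBeta ts bs m T δ '' Set.Icc (-r) T).Nonempty :=
    ⟨_, Set.mem_image_of_mem _ (show T ∈ Set.Icc (-r) T from ⟨by linarith, le_rfl⟩)⟩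
  have hsubV : impBeta ts bs m T δ '' Set.Icc (-r) T ⊆ ↑(betaVals bs m) := by
    rintro y ⟨s, _, rfl⟩; exact impBeta_mem_betaVals ts bs m T δ s
  have hfin : (impBeta ts bs m T δ '' Set.Icc (-r) T).Finite :=
    (betaVals bs m).finite_toSet.subset hsubV
  have hk0le : ∀ s ∈ Set.Icc (-r) T, k0 ≤ impBeta ts bs m T δ s := by
    intro s hs; rw [hk0]
    exact csInf_le hfin.bddBelow (Set.mem_image_of_mem _ hs)
  have hleK0 : ∀ s ∈ Set.Icc (-r) T, impBeta ts bs m T δ s ≤ K0 := by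
    intro s hs; rw [hK0]
    exact le_csSup hfin.bddAbove (Set.mem_image_of_mem _ hs)
  have hVne : (betaVals bs m).Nonempty := ⟨1, Finset.mem_insert_self _ _⟩
  have hk0pos : 0 < k0 := by
    rw [hk0]
    have hminpos : 0 < (betaVals bs m).min' hVne :=
      betaVals_pos bs m hbk _ ((betaVals bs m).min'_mem hVne)
    refine lt_of_lt_of_le hminpos (le_csInf hne ?_)
    intro y hy
    exact (betaVals bs m).min'_le y (hsubV hy)
  have hK0pos : 0 < K0 := by
    have h1 := hk0le T ⟨by linarith, le_rfl⟩
    have h2 := hleK0 T ⟨by linarith, le_rfl⟩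
    linarith
  -- the contraction constant q
  set q : ℝ := B * K0 / k0 with hq_def
  have hq0 : 0 ≤ q := div_nonneg (mul_nonneg hB0 hK0pos.le) hk0pos.le
  have hBK0 : B * K0 < k0 := by
    have := (lt_div_iff₀ hK0pos).mp hH3
    linarith
  have hq1 : q < 1 := (div_lt_one hk0pos).mpr hBK0
  have hqk : q * k0 = B * K0 := div_mul_cancel₀ _ (ne_of_gt hk0pos)
  have hbTk : b * (T * k0) < k0 - B * K0 := (lt_div_iff₀ (by positivity)).mp hbb
  have hbT : b * T < 1 - q := by nlinarith
  have hbTpos : 0 < 1 - q - b * T := by linarith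
  -- continuity of x on [0,T]
  have hxc : ContinuousOn x (Set.Icc 0 T) := by
    have h1 : Set.uIcc (0:ℝ) T = Set.Icc 0 T := Set.uIcc_of_le hT0.le
    have hprim : ContinuousOn (fun t' => x 0 + ∫ s in (0:ℝ)..t', g s) (Set.Icc 0 T) := by
      apply continuousOn_const.add
      have h2 := intervalIntegral.continuousOn_primitive_interval
        (μ := volume) (a := 0) (b := T) (f := g) (by rw [h1]; exact hAC.1)
      rwa [h1] at h2
    exact ContinuousOn.congr hprim hAC.2
  have hpc : ContinuousOn (pext T x) (Set.Icc (-T) T) := continuousOn_pext T x hT0 hxc hper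
  have hreg1 : ∀ t' ∈ Set.Icc 0 T, RegulatedOn (fun τ => pext T x (t' + τ)) (-r) 0 :=
    fun t' ht' => regulatedOn_pext_shift T r t' x hpc ht' hr0 hrT
  have hreg2 : ∀ t' ∈ Set.Icc 0 T,
      RegulatedOn (fun τ => impBeta ts bs m T δ (t' + τ) * pext T x (t' + τ)) (-r) 0 :=
    fun t' ht' => regulatedOn_beta_mul ts bs m T δ r t' x hpc ht' hr0 hrT
  have hxeq : ∀ t' ∈ Set.Icc 0 T, pext T x t' = x t' := fun t' ht' => pext_apply_nonneg ht'.1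
  -- Lipschitz bound on f
  have hfb : ∀ t' ∈ Set.Icc 0 T,
      |f t' (fun τ => impBeta ts bs m T δ (t' + τ) * pext T x (t' + τ))|
        ≤ S + b * (impBeta ts bs m T δ t' * |x t'|) := by
    intro t' ht'
    have h4 := hH4 (fun τ => impBeta ts bs m T δ (t' + τ) * pext T x (t' + τ)) (fun _ => 0)
      (hreg2 t' ht') (regulatedOn_zero _ _) t' ht'
    simp only [add_zero, sub_zero, hxeq t' ht'] at h4
    have h5 := hfS t' ht'
    have h7 : |impBeta ts bs m T δ t' * x t'| = impBeta ts bs m T δ t' * |x t'| := by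
      rw [abs_mul, abs_of_pos (hβpos t')]
    rw [h7] at h4
    have h6 : |f t' (fun τ => impBeta ts bs m T δ (t' + τ) * pext T x (t' + τ))|
        - |f t' (fun _ => (0:ℝ))| ≤ b * (impBeta ts bs m T δ t' * |x t'|) :=
      le_trans (abs_sub_abs_le_abs_sub _ _) h4
    linarith
  have hβk0 : ∀ t' ∈ Set.Icc (0:ℝ) T, k0 ≤ impBeta ts bs m T δ t' :=
    fun t' ht' => hk0le t' ⟨by linarith [ht'.1], ht'.2⟩
  have hβδK0 : ∀ t' ∈ Set.Icc (0:ℝ) T, impBeta ts bs m T δ (t' - δ) ≤ K0 :=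
    fun t' ht' => hleK0 _ ⟨by linarith [ht'.1], by linarith [ht'.2]⟩
  -- key estimate on the delayed term
  have hkey : ∀ t' ∈ Set.Icc (0:ℝ) T, ∀ v : ℝ,
      B * impBeta ts bs m T δ (t' - δ) * v / impBeta ts bs m T δ t' ≤ q * max v 0 := by
    intro t' ht' v
    rcases le_or_gt v 0 with hv | hv
    · have h1 : B * impBeta ts bs m T δ (t' - δ) * v ≤ 0 :=
        mul_nonpos_of_nonneg_of_nonpos (mul_nonneg hB0 (hβpos _).le) hv
      have h2 : B * impBeta ts bs m T δ (t' - δ) * v / impBeta ts bs m T δ t' ≤ 0 :=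
        div_nonpos_of_nonpos_of_nonneg h1 (hβpos t').le
      have h3 : 0 ≤ q * max v 0 := mul_nonneg hq0 (le_max_right _ _)
      linarith
    · rw [max_eq_left hv.le, div_le_iff₀ (hβpos t')]
      have h1 := hβδK0 t' ht'
      have h2 := hβk0 t' ht'
      have h3 : B * impBeta ts bs m T δ (t' - δ) ≤ q * impBeta ts bs m T δ t' := by
        have e1 : B * impBeta ts bs m T δ (t' - δ) ≤ B * K0 :=
          mul_le_mul_of_nonneg_left h1 hB0
        have e2 : q * k0 ≤ q * impBeta ts bs m T δ t' := mul_le_mul_of_nonneg_left h2 hq0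
        linarith [hqk]
      nlinarith [mul_le_mul_of_nonneg_right h3 hv.le]
  have hzero : (∫ s in (0:ℝ)..T, g s) = 0 := by
    have h1 := hAC.2 T ⟨hT0.le, le_rfl⟩
    rw [← hper] at h1; linarith
  -- common contradiction machinery
  have hcontra : (∀ t' ∈ Set.Icc (0:ℝ) T,
        f t' (fun τ => impBeta ts bs m T δ (t' + τ) * pext T x (t' + τ)) ≠ 0) →
      (∀ᵐ t' ∂(volume : Measure ℝ), t' ∈ Set.Icc 0 T → g t' = 0) → False := by
    intro hfne hg0
    have hgd0 := pext_shift_null T δ g hδ0 hδT hg0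
    have hbad : ∀ᵐ t' ∂(volume : Measure ℝ), ¬ (t' ∈ Set.Icc (0:ℝ) T) := by
      filter_upwards [heq, hg0, hgd0] with t' hteq hgt hgdt
      intro hmem
      have h1 := hteq hmem
      rw [hgt hmem, hgdt hmem] at h1
      simp only [mul_zero, zero_div, zero_add] at h1
      have hβne : impBeta ts bs m T δ t' ≠ 0 := (hβpos t').ne'
      rw [eq_comm, div_eq_zero_iff] at h1
      rcases h1 with h1 | h1
      · rcases mul_eq_zero.mp h1 with h | h
        · exact absurd h hlam0.ne'
        · exact hfne t' hmem h
      · exact hβne h1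
    have hIccnull : (volume : Measure ℝ) (Set.Icc (0:ℝ) T) = 0 := by
      have h5 := MeasureTheory.ae_iff.mp hbad
      have h6 : {a : ℝ | ¬¬(a ∈ Set.Icc (0:ℝ) T)} = Set.Icc (0:ℝ) T := by
        ext a; simp
      rwa [h6] at h5
    rw [Real.volume_Icc] at hIccnull
    have : ENNReal.ofReal (T - 0) ≠ 0 := by
      simp only [ne_eq, ENNReal.ofReal_eq_zero, not_le]
      linarith
    exact this hIccnull
  by_cases hstar : ∃ t0 ∈ Set.Icc (0:ℝ) T, |x t0| ≤ d
  case neg =>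
    exfalso
    push_neg at hstar
    have hsign : (∀ t' ∈ Set.Icc (0:ℝ) T, d < x t') ∨ (∀ t' ∈ Set.Icc (0:ℝ) T, x t' < -d) := by
      by_contra hcon
      push_neg at hcon
      obtain ⟨⟨t1, ht1, h1⟩, ⟨t2, ht2, h2⟩⟩ := hcon
      have h1' : x t1 < -d := by
        rcases lt_abs.mp (hstar t1 ht1) with h | h
        · linarith
        · linarith
      have h2' : d < x t2 := by
        rcases lt_abs.mp (hstar t2 ht2) with h | h
        · exact h
        · linarith
      have hsub : Set.uIcc t1 t2 ⊆ Set.Icc (0:ℝ) T := Set.uIcc_subset_Icc ht1 ht2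
      have hcont : ContinuousOn x (Set.uIcc t1 t2) := hxc.mono hsub
      have h0mem : (0:ℝ) ∈ Set.uIcc (x t1) (x t2) := by
        rw [Set.mem_uIcc]; left; constructor <;> linarith
      obtain ⟨t3, ht3, hxt3⟩ := intermediate_value_uIcc hcont h0mem
      have h8 := hstar t3 (hsub ht3)
      rw [hxt3] at h8
      simp at h8
      linarith
    rcases hsign with hpos | hneg
    · -- x > d everywhere; f > 0
      have hfpos : ∀ t' ∈ Set.Icc (0:ℝ) T,
          0 < f t' (fun τ => impBeta ts bs m T δ (t' + τ) * pext T x (t' + τ)) := by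
        intro t' ht'
        have hxp : 0 < x t' := lt_trans hd (hpos t' ht')
        have habs : d ≤ |(fun τ => pext T x (t' + τ)) 0| := by
          simp only [add_zero, hxeq t' ht']
          exact le_trans (hpos t' ht').le (le_abs_self _)
        have hH2' := hH2 (fun τ => pext T x (t' + τ)) (hreg1 t' ht') habs t' ht'
        simp only [add_zero, hxeq t' ht'] at hH2'
        rcases mul_pos_iff.mp hH2' with ⟨_, hf⟩ | ⟨hx', _⟩
        · exact hf
        · linarith
      have haecore : ∀ᵐ t' ∂(volume : Measure ℝ), t' ∈ Set.Icc 0 T →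
          -(g t') ≤ q * max (pext T g (t' - δ)) 0 := by
        filter_upwards [heq] with t' hteq hmem
        have heqt := hteq hmem
        have hfp := hfpos t' hmem
        have hβt := hβpos t'
        have hrhs : 0 < lam * f t' (fun τ => impBeta ts bs m T δ (t' + τ) * pext T x (t' + τ))
            / impBeta ts bs m T δ t' := by positivity
        have h9 : -(g t') < B * impBeta ts bs m T δ (t' - δ) * pext T g (t' - δ)
            / impBeta ts bs m T δ t' := by linarith
        exact le_trans h9.le (hkey t' hmem _)
      have hg0 := core_zero T δ q g hT0 hδ0 hδT hq0 hq1 hAC.1 hzero haecore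
      exact hcontra (fun t' ht' => (hfpos t' ht').ne') hg0
    · -- x < -d everywhere; f < 0
      have hfneg : ∀ t' ∈ Set.Icc (0:ℝ) T,
          f t' (fun τ => impBeta ts bs m T δ (t' + τ) * pext T x (t' + τ)) < 0 := by
        intro t' ht'
        have hxn : x t' < 0 := by linarith [hneg t' ht']
        have habs : d ≤ |(fun τ => pext T x (t' + τ)) 0| := by
          simp only [add_zero, hxeq t' ht']
          rw [abs_of_neg hxn]
          linarith [hneg t' ht']
        have hH2' := hH2 (fun τ => pext T x (t' + τ)) (hreg1 t' ht') habs t' ht'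
        simp only [add_zero, hxeq t' ht'] at hH2'
        rcases mul_pos_iff.mp hH2' with ⟨hx', _⟩ | ⟨_, hf⟩
        · linarith
        · exact hf
      set g' : ℝ → ℝ := fun s => -(g s) with hg'_def
      have hg'zero : (∫ s in (0:ℝ)..T, g' s) = 0 := by
        rw [hg'_def]
        rw [intervalIntegral.integral_neg, hzero, neg_zero]
      have haecore : ∀ᵐ t' ∂(volume : Measure ℝ), t' ∈ Set.Icc 0 T →
          -(g' t') ≤ q * max (pext T g' (t' - δ)) 0 := by
        filter_upwards [heq] with t' hteq hmem
        have heqt := hteq hmem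
        have hfn := hfneg t' hmem
        have hβt := hβpos t'
        have hrhs : lam * f t' (fun τ => impBeta ts bs m T δ (t' + τ) * pext T x (t' + τ))
            / impBeta ts bs m T δ t' < 0 := by
          apply div_neg_of_neg_of_pos _ hβt
          exact mul_neg_of_pos_of_neg hlam0 hfn
        have h9 : -(g' t') < -(B * impBeta ts bs m T δ (t' - δ) * pext T g (t' - δ)
            / impBeta ts bs m T δ t') := by
          simp only [hg'_def, neg_neg]
          linarith
        have h10 : -(B * impBeta ts bs m T δ (t' - δ) * pext T g (t' - δ)
            / impBeta ts bs m T δ t')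
            = B * impBeta ts bs m T δ (t' - δ) * pext T g' (t' - δ)
            / impBeta ts bs m T δ t' := by
          rw [hg'_def, pext_comp T g (fun y => -y)]
          ring
        rw [h10] at h9
        exact le_trans h9.le (hkey t' hmem _)
      have hg'0 := core_zero T δ q g' hT0 hδ0 hδT hq0 hq1 hAC.1.neg hg'zero haecore
      have hg0 : ∀ᵐ t' ∂(volume : Measure ℝ), t' ∈ Set.Icc 0 T → g t' = 0 := by
        filter_upwards [hg'0] with t' h hmem
        have := h hmem
        rw [hg'_def] at this
        simpa using this
      exact hcontra (fun t' ht' => (hfneg t' ht').ne) hg0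
  case pos =>
    obtain ⟨t0, ht0, hd0⟩ := hstar
    set G : ℝ := ∫ s in Set.Icc (0:ℝ) T, |g s| with hG_def
    have hgabs : IntegrableOn (fun s => |g s|) (Set.Icc (0:ℝ) T) := hAC.1.abs
    have hGnn : 0 ≤ G :=
      MeasureTheory.setIntegral_nonneg measurableSet_Icc (fun _ _ => abs_nonneg _)
    have hII : ∀ a' ∈ Set.Icc (0:ℝ) T, ∀ b' ∈ Set.Icc (0:ℝ) T,
        IntervalIntegrable g volume a' b' := by
      intro a' ha' b' hb'
      apply MeasureTheory.IntegrableOn.intervalIntegrable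
      exact hAC.1.mono_set (Set.uIcc_subset_Icc ha' hb')
    have hxb : ∀ t' ∈ Set.Icc (0:ℝ) T, |x t'| ≤ d + G := by
      intro t' ht'
      have e1 := hAC.2 t' ht'
      have e2 := hAC.2 t0 ht0
      have hadj := intervalIntegral.integral_add_adjacent_intervals
        (hII 0 ⟨le_rfl, hT0.le⟩ t0 ht0) (hII t0 ht0 t' ht')
      have hdiff : x t' - x t0 = ∫ s in t0..t', g s := by
        rw [e1, e2]; linarith
      have habs2 : |∫ s in t0..t', g s| ≤ G := by
        have hmono : ∀ a' b' : ℝ, a' ∈ Set.Icc (0:ℝ) T → b' ∈ Set.Icc (0:ℝ) T → a' ≤ b' →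
            (∫ s in a'..b', |g s|) ≤ G := by
          intro a' b' ha' hb' hle
          rw [intervalIntegral.integral_of_le hle, hG_def]
          refine MeasureTheory.setIntegral_mono_set hgabs ?_ ?_
          · apply MeasureTheory.ae_restrict_of_ae
            filter_upwards with s
            exact abs_nonneg _
          · exact Filter.Eventually.of_forall
              (fun s hs => Set.Ioc_subset_Icc_self.trans
                (Set.Icc_subset_Icc ha'.1 hb'.2) hs)
        rcases le_total t0 t' with hle | hle
        · exact le_trans (intervalIntegral.abs_integral_le_integral_abs hle)
            (hmono t0 t' ht0 ht' hle)
        · rw [intervalIntegral.integral_symm, abs_neg]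
          exact le_trans (intervalIntegral.abs_integral_le_integral_abs hle)
            (hmono t' t0 ht' ht0 hle)
      have h11 : |x t'| ≤ |x t0| + |x t' - x t0| := by
        have := abs_add_le (x t0) (x t' - x t0)
        simpa using this
      rw [hdiff] at h11
      linarith
    -- pointwise a.e. bound on |g|
    have hpext_abs_int : IntegrableOn (fun s => pext T (fun y => |g y|) (s - δ))
        (Set.Icc (0:ℝ) T) := pext_shift_integrableOn T δ _ hδ0 hδT hgabs
    have hconst_int : IntegrableOn (fun _ : ℝ => S / k0 + b * (d + G)) (Set.Icc (0:ℝ) T) := by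
      refine MeasureTheory.integrableOn_const ?_
      rw [Real.volume_Icc]
      exact ENNReal.ofReal_ne_top
    have hw_int : IntegrableOn
        (fun s => q * pext T (fun y => |g y|) (s - δ) + (S / k0 + b * (d + G)))
        (Set.Icc (0:ℝ) T) := (hpext_abs_int.const_mul q).add hconst_int
    have haeg : ∀ᵐ s ∂(volume : Measure ℝ), s ∈ Set.Icc 0 T →
        |g s| ≤ q * pext T (fun y => |g y|) (s - δ) + (S / k0 + b * (d + G)) := by
      filter_upwards [heq] with s hseq hmem
      have heqs := hseq hmem
      have hβs := hβpos s
      have h1 : |g s| ≤ |lam * f s (fun τ => impBeta ts bs m T δ (s + τ) * pext T x (s + τ))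
          / impBeta ts bs m T δ s|
          + |B * impBeta ts bs m T δ (s - δ) * pext T g (s - δ) / impBeta ts bs m T δ s| := by
        have hgs : g s = lam * f s (fun τ => impBeta ts bs m T δ (s + τ) * pext T x (s + τ))
            / impBeta ts bs m T δ s
            - B * impBeta ts bs m T δ (s - δ) * pext T g (s - δ) / impBeta ts bs m T δ s := by
          linarith
        rw [hgs]
        exact abs_sub _ _
      have h2 : |lam * f s (fun τ => impBeta ts bs m T δ (s + τ) * pext T x (s + τ))
          / impBeta ts bs m T δ s| ≤ S / k0 + b * |x s| := by
        rw [abs_div, abs_of_pos hβs, abs_mul, abs_of_pos hlam0]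
        have hfb' := hfb s hmem
        have hfa : 0 ≤ |f s (fun τ => impBeta ts bs m T δ (s + τ) * pext T x (s + τ))| :=
          abs_nonneg _
        have hl1 : lam * |f s (fun τ => impBeta ts bs m T δ (s + τ) * pext T x (s + τ))|
            ≤ S + b * (impBeta ts bs m T δ s * |x s|) := by
          have e1 : lam * |f s (fun τ => impBeta ts bs m T δ (s + τ) * pext T x (s + τ))|
              ≤ 1 * |f s (fun τ => impBeta ts bs m T δ (s + τ) * pext T x (s + τ))| :=
            mul_le_mul_of_nonneg_right hlam1.le hfa
          rw [one_mul] at e1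
          linarith
        have hβne : impBeta ts bs m T δ s ≠ 0 := hβs.ne'
        calc lam * |f s (fun τ => impBeta ts bs m T δ (s + τ) * pext T x (s + τ))|
            / impBeta ts bs m T δ s
            ≤ (S + b * (impBeta ts bs m T δ s * |x s|)) / impBeta ts bs m T δ s :=
              (div_le_div_iff_of_pos_right hβs).mpr hl1
          _ = S / impBeta ts bs m T δ s + b * |x s| := by
              field_simp
          _ ≤ S / k0 + b * |x s| := by
              have : S / impBeta ts bs m T δ s ≤ S / k0 :=
                div_le_div_of_nonneg_left hS.le hk0pos (hβk0 s hmem)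
              linarith
      have h3 : |B * impBeta ts bs m T δ (s - δ) * pext T g (s - δ) / impBeta ts bs m T δ s|
          ≤ q * pext T (fun y => |g y|) (s - δ) := by
        rw [abs_div, abs_of_pos hβs, abs_mul, abs_mul, abs_of_nonneg hB0,
          abs_of_pos (hβpos (s - δ))]
        have hk := hkey s hmem |pext T g (s - δ)|
        rw [max_eq_left (abs_nonneg _)] at hk
        rw [pext_comp T g (fun y => |y|)]
        exact hk
      have h4 := hxb s hmem
      have h5 : b * |x s| ≤ b * (d + G) := mul_le_mul_of_nonneg_left h4 hb0.le
      linarith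
    have hint1 : G ≤ ∫ s in Set.Icc (0:ℝ) T,
        (q * pext T (fun y => |g y|) (s - δ) + (S / k0 + b * (d + G))) := by
      rw [hG_def]
      exact MeasureTheory.setIntegral_mono_ae_restrict hgabs hw_int
        ((MeasureTheory.ae_restrict_iff' measurableSet_Icc).mpr haeg)
    have hshiftG : (∫ s in Set.Icc (0:ℝ) T, pext T (fun y => |g y|) (s - δ)) = G := by
      rw [hG_def, MeasureTheory.integral_Icc_eq_integral_Ioc,
        MeasureTheory.integral_Icc_eq_integral_Ioc,
        ← intervalIntegral.integral_of_le hT0.le, ← intervalIntegral.integral_of_le hT0.le]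
      exact pext_shift_integral T δ _ hδ0 hδT hgabs
    have hTmeas : ((volume : Measure ℝ) (Set.Icc (0:ℝ) T)).toReal = T := by
      rw [Real.volume_Icc, ENNReal.toReal_ofReal (by linarith)]
      ring
    have hint2 : (∫ s in Set.Icc (0:ℝ) T,
        (q * pext T (fun y => |g y|) (s - δ) + (S / k0 + b * (d + G))))
        = q * G + (S / k0 + b * (d + G)) * T := by
      rw [MeasureTheory.integral_add (hpext_abs_int.const_mul q) hconst_int,
        MeasureTheory.integral_const_mul, hshiftG, MeasureTheory.setIntegral_const, MeasureTheory.measureReal_def, hTmeas,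
        smul_eq_mul]
      ring
    have hGle : G ≤ q * G + (S / k0 + b * (d + G)) * T := by
      rw [← hint2]; exact hint1
    have hG0 : G ≤ (S / k0 * T + b * T * d) / (1 - q - b * T) := by
      rw [le_div_iff₀ hbTpos]; nlinarith
    have hDeq : d + (S / k0 * T + b * T * d) / (1 - q - b * T)
        = d + (b * d * k0 + S) * T / (k0 - b * T * k0 - B * K0) := by
      have hden : k0 - b * T * k0 - B * K0 = (1 - q - b * T) * k0 := by
        rw [sub_mul, sub_mul, one_mul, hqk]; ring
      rw [hden]
      have hk0ne : k0 ≠ 0 := hk0pos.ne'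
      have hbne : (1 - q - b * T) ≠ 0 := hbTpos.ne'
      field_simp
      ring
    have hfinal := hxb t ht
    linarith [hG0, hDeq.le, hDeq.ge]
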